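/- Let n ≥ 2. The set { z = (z₁, z₂, z̃) ∈ ℂ × ℂ × ℂ^{n−2} : Re(z₁z₂) + |z₁|² = 0 and z₁ ≠ 0 } is path-connected. -/

import Mathlib

open Complex

lemma isPathConnected_prod' {X Y : Type*} [TopologicalSpace X] [TopologicalSpace Y]
    {s : Set X} {t : Set Y} (hs : IsPathConnected s) (ht : IsPathConnected t) :
    IsPathConnected (s ×ˢ t) := by
  obtain ⟨x, hx, hjx⟩ := hs
  obtain ⟨y, hy, hjy⟩ := ht
  refine ⟨(x, y), ⟨hx, hy⟩, ?_⟩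
  rintro ⟨a, b⟩ ⟨ha, hb⟩
  obtain ⟨γ₁, hγ₁⟩ := hjx ha
  obtain ⟨γ₂, hγ₂⟩ := hjy hb
  exact ⟨γ₁.prod γ₂, fun u => ⟨hγ₁ u, hγ₂ u⟩⟩

/-- The set `M₁ \ {z₁ = 0}`, where
`M₁ = {z ∈ ℂ^n : Re(z₁ z₂) + |z₁|² = 0}` (and `n = m + 2 ≥ 2`), is path-connected. -/
theorem M1_minus_hyperplane_pathConnected (m : ℕ) :
    IsPathConnected {z : EuclideanSpace ℂ (Fin (m + 2)) |
      (z 0 * z 1).re + ‖z 0‖ ^ 2 = 0 ∧ z 0 ≠ 0} := by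
  set E := EuclideanSpace ℂ (Fin (m + 2))
  -- the parametrizing domain
  set D : Set (ℂ × (ℝ × E)) := ({(0 : ℂ)}ᶜ : Set ℂ) ×ˢ (Set.univ) with hDdef
  have hD : IsPathConnected D := by
    refine isPathConnected_prod' ?_ isPathConnected_univ
    exact isPathConnected_compl_singleton_of_one_lt_rank
      (by rw [Complex.rank_real_complex]; norm_num) 0
  -- the parametrizing map
  set f : ℂ × (ℝ × E) → E := fun p =>
    (EuclideanSpace.equiv (Fin (m + 2)) ℂ).symm
      (fun i => if i = 0 then p.1
        else if i = 1 then (-(‖p.1‖ : ℂ) ^ 2 + p.2.1 * I) / p.1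
        else p.2.2 i) with hfdef
  have hcont : ContinuousOn f D := by
    rw [hfdef]
    refine ((EuclideanSpace.equiv (Fin (m + 2)) ℂ).symm.continuous).comp_continuousOn ?_
    refine continuousOn_pi.2 fun i => ?_
    split_ifs
    · exact continuousOn_fst
    · apply ContinuousOn.div
      · apply Continuous.continuousOn
        fun_prop
      · exact continuousOn_fst
      · rintro ⟨a, s, z⟩ ⟨ha, -⟩
        exact ha
    · apply Continuous.continuousOn
      exact (continuous_apply i).comp
        ((EuclideanSpace.equiv (Fin (m + 2)) ℂ).continuous.comp continuous_snd.snd)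
  have himg : f '' D = {z : E | (z 0 * z 1).re + ‖z 0‖ ^ 2 = 0 ∧ z 0 ≠ 0} := by
    ext z
    constructor
    · rintro ⟨⟨a, s, w⟩, ⟨ha, -⟩, rfl⟩
      have ha' : (a : ℂ) ≠ 0 := ha
      have h0 : f (a, s, w) 0 = a := by simp [hfdef, EuclideanSpace.equiv]
      have h1 : f (a, s, w) 1 = (-(‖a‖ : ℂ) ^ 2 + s * I) / a := by
        simp [hfdef, EuclideanSpace.equiv]
      refine ⟨?_, by rw [h0]; exact ha'⟩
      rw [h0, h1, mul_div_cancel₀ _ ha']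
      simp [← Complex.ofReal_pow]
    · rintro ⟨h1, h2⟩
      refine ⟨(z 0, (z 0 * z 1).im, z), ⟨h2, trivial⟩, ?_⟩
      ext i
      show (if i = 0 then z 0
        else if i = 1 then (-(‖z 0‖ : ℂ) ^ 2 + ((z 0 * z 1).im : ℂ) * I) / z 0
        else z i) = z i
      split_ifs with hi0 hi1
      · rw [hi0]
      · rw [hi1]
        have : -(‖z 0‖ : ℂ) ^ 2 + ((z 0 * z 1).im : ℂ) * I = z 0 * z 1 := by
          have hre : ((z 0 * z 1).re : ℂ) = -(‖z 0‖ : ℂ) ^ 2 := by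
            have : (z 0 * z 1).re = -‖z 0‖ ^ 2 := by linarith
            rw [this]; push_cast; ring
          rw [← hre, Complex.re_add_im]
        rw [this, mul_div_cancel_left₀ _ h2]
      · rfl
  rw [← himg]
  exact hD.image' hcont
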